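/- Let ε ∈ ℝ with 0 < ε² < 1/12 and set c = (1/9)·√((6 − 6·√(1−12ε²))/ε²)·(√(1−12ε²) + 2). Then the dispersion relation of the linearized extended Fisher–KPP equation at speed c has a double root at λ = 0: there exists ν ∈ ℂ such that −ε²·ν⁴ + ν² + c·ν + 1 = 0 and −4ε²·ν³ + 2ν + c = 0. -/

import Mathlib

/-- At the linear spreading speed `c_lin` of the extended Fisher–KPP equation
`w_t = −ε²w_{xxxx} + w_{xx} + w − w³`, the dispersion relation
`λ = −ε²ν⁴ + ν² + cν + 1` of the linearization in the comoving frame has a double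
root at `λ = 0`. -/
theorem extended_fisher_kpp_double_root_at_zero
    (ε : ℝ) (hε0 : 0 < ε ^ 2) (hε : ε ^ 2 < 1 / 12)
    (c : ℝ)
    (hc : c = (1 / 9) * Real.sqrt ((6 - 6 * Real.sqrt (1 - 12 * ε ^ 2)) / ε ^ 2) *
        (Real.sqrt (1 - 12 * ε ^ 2) + 2)) :
    ∃ ν : ℂ,
      -(ε : ℂ) ^ 2 * ν ^ 4 + ν ^ 2 + (c : ℂ) * ν + 1 = 0 ∧
      -4 * (ε : ℂ) ^ 2 * ν ^ 3 + 2 * ν + (c : ℂ) = 0 := by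
  set s : ℝ := Real.sqrt (1 - 12 * ε ^ 2) with hs_def
  have h12 : (0:ℝ) ≤ 1 - 12 * ε ^ 2 := by linarith
  have hs2 : s ^ 2 = 1 - 12 * ε ^ 2 := Real.sq_sqrt h12
  have hs0 : 0 ≤ s := Real.sqrt_nonneg _
  have hs1 : s ≤ 1 := by nlinarith [hs2]
  set r : ℝ := Real.sqrt ((1 - s) / (6 * ε ^ 2)) with hr_def
  have hfrac : (0:ℝ) ≤ (1 - s) / (6 * ε ^ 2) :=
    div_nonneg (by linarith) (by positivity)
  have hr2 : r ^ 2 = (1 - s) / (6 * ε ^ 2) := Real.sq_sqrt hfrac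
  have h1 : 6 * ε ^ 2 * r ^ 2 = 1 - s := by
    rw [hr2]; field_simp [show ε ≠ 0 from fun h => by simp [h] at hε0]
  -- rewrite c in terms of r and s
  have hsqrt : Real.sqrt ((6 - 6 * s) / ε ^ 2) = 6 * r := by
    have heq : (6 - 6 * s) / ε ^ 2 = 36 * ((1 - s) / (6 * ε ^ 2)) := by
      field_simp; ring
    rw [heq, Real.sqrt_mul (by norm_num : (0:ℝ) ≤ 36)]
    rw [show (36:ℝ) = 6 ^ 2 by norm_num, Real.sqrt_sq (by norm_num : (0:ℝ) ≤ 6)]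
  have hC : c = 2 / 3 * r * (s + 2) := by
    rw [hc, hsqrt]; ring
  -- cast everything to ℂ
  have h1C : 6 * (ε:ℂ) ^ 2 * (r:ℂ) ^ 2 = 1 - (s:ℂ) := by exact_mod_cast h1
  have hBC : (s:ℂ) ^ 2 = 1 - 12 * (ε:ℂ) ^ 2 := by exact_mod_cast hs2
  have hCC : (c:ℂ) = 2 / 3 * (r:ℂ) * ((s:ℂ) + 2) := by rw [hC]; push_cast; ring
  refine ⟨-(r:ℂ), ?_, ?_⟩
  · have hεC : 36 * (ε:ℂ) ^ 2 ≠ 0 := by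
      have : (ε:ℂ) ^ 2 ≠ 0 := by exact_mod_cast hε0.ne'
      exact mul_ne_zero (by norm_num) this
    have h36 : 36 * (ε:ℂ) ^ 2 *
        (-(ε:ℂ) ^ 2 * (-(r:ℂ)) ^ 4 + (-(r:ℂ)) ^ 2 + (c:ℂ) * (-(r:ℂ)) + 1) = 0 := by
      linear_combination (-6 * (ε:ℂ) ^ 2 * (r:ℂ) ^ 2 - 3 - 3 * (s:ℂ)) * h1C + 3 * hBC
        + (-36 * (ε:ℂ) ^ 2 * (r:ℂ)) * hCC
    exact (mul_eq_zero.mp h36).resolve_left hεC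
  · linear_combination (2 / 3 * (r:ℂ)) * h1C + hCC
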